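/- arXiv:1201.4725 — 2 statements merged into one kernel-verified Lean document; each statement's English description precedes it below -/
import Mathlib

section
/- Let (ε_n)_{n∈ℕ} be a sequence of reals with ε_n ∈ (0, 1/2] for all n and ε_n ≥ n^{−C} for some constant C > 0 and all sufficiently large n (i.e. ε_n = 1/poly(n)). Define N'_n = 2^{n/log₂ n} · 4/(2ε_n)^4 and T'_n = log₂ N'_n / (3·log₂ N'_n + 4 + 4·log₂ ε_n). Then, as n → ∞: (i) log₂ N'_n = o(n); (ii) (n + 2)·T'_n = n/3 + o(n); and consequently (iii) (n + 2)·T'_n + log₂ N'_n + log₂((n + 2)·T'_n + log₂ N'_n) = n/3 + o(n), i.e. the difference between this quantity and n/3, divided by n, tends to 0. -/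
open Filter Asymptotics

private lemma aux_logb_nat_tendsto : Tendsto (fun n : ℕ => Real.logb 2 n) atTop atTop :=
  (Real.tendsto_logb_atTop (by norm_num)).comp tendsto_natCast_atTop_atTop

private lemma aux_logb_pow_div (k : ℕ) :
    Tendsto (fun n : ℕ => (Real.logb 2 n) ^ k / n) atTop (nhds 0) := by
  have h := (Real.tendsto_pow_log_div_mul_add_atTop 1 0 k one_ne_zero).comp
    (tendsto_natCast_atTop_atTop (R := ℝ))
  have h2 := h.mul_const ((1 / Real.log 2) ^ k)
  rw [zero_mul] at h2
  refine h2.congr fun n => ?_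
  simp only [Function.comp, one_mul, add_zero, Real.logb, div_pow]
  ring

/-- If the bias sequence satisfies `ε n ∈ (0, 1/2]` and `ε n ≥ n^(-C)` for large `n`
(i.e. `ε = 1/poly(n)`), and `N' n = 2^(n/log₂ n) · 4/(2 ε n)^4`,
`T' n = log₂ N' n / (3 log₂ N' n + 4 + 4 log₂ ε n)`, then `log₂ N' n = o(n)`,
`(n+2) T' n = n/3 + o(n)` and the full exponent
`(n+2) T' n + log₂ N' n + log₂((n+2) T' n + log₂ N' n)` equals `n/3 + o(n)`. -/
theorem lpn_cube_root_exponent (ε : ℕ → ℝ) (hε : ∀ n, ε n ∈ Set.Ioc (0 : ℝ) (1 / 2))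
    (hpoly : ∃ C : ℝ, 0 < C ∧ ∀ᶠ n : ℕ in atTop, (n : ℝ) ^ (-C) ≤ ε n)
    (N' T' : ℕ → ℝ)
    (hN' : ∀ n, N' n = 2 ^ ((n : ℝ) / Real.logb 2 n) * 4 / (2 * ε n) ^ 4)
    (hT' : ∀ n, T' n =
      Real.logb 2 (N' n) / (3 * Real.logb 2 (N' n) + 4 + 4 * Real.logb 2 (ε n))) :
    (fun n : ℕ => Real.logb 2 (N' n)) =o[atTop] (fun n : ℕ => (n : ℝ)) ∧
      (fun n : ℕ => ((n : ℝ) + 2) * T' n - n / 3) =o[atTop] (fun n : ℕ => (n : ℝ)) ∧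
      Tendsto (fun n : ℕ =>
          (((n : ℝ) + 2) * T' n + Real.logb 2 (N' n) +
              Real.logb 2 (((n : ℝ) + 2) * T' n + Real.logb 2 (N' n)) - n / 3) / n)
        atTop (nhds 0) := by
  obtain ⟨C, hC, hCev⟩ := hpoly
  have hεpos : ∀ n, 0 < ε n := fun n => (hε n).1
  have hεle : ∀ n, ε n ≤ 1 / 2 := fun n => (hε n).2
  set e : ℕ → ℝ := fun n => -Real.logb 2 (ε n) with he
  set a : ℕ → ℝ := fun n => (n : ℝ) / Real.logb 2 n with ha
  have hlog2 : Real.logb 2 2 = 1 := Real.logb_self_eq_one (by norm_num)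
  -- the key identity for log₂ N'
  have hL : ∀ n, Real.logb 2 (N' n) = a n - 2 + 4 * e n := by
    intro n
    have h2ε : (2 * ε n) ≠ 0 := by have := hεpos n; positivity
    have hpow : ((2:ℝ) * ε n) ^ 4 ≠ 0 := pow_ne_zero _ h2ε
    have h2x : ((2:ℝ) ^ ((n:ℝ) / Real.logb 2 n)) ≠ 0 :=
      ne_of_gt (Real.rpow_pos_of_pos two_pos _)
    have h4 : Real.logb 2 4 = 2 := by
      rw [show (4:ℝ) = 2^(2:ℕ) by norm_num, Real.logb_pow, hlog2]; norm_num
    rw [hN' n, Real.logb_div (by positivity) hpow, Real.logb_mul h2x (by norm_num),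
        Real.logb_rpow (by norm_num) (by norm_num), Real.logb_pow,
        Real.logb_mul two_ne_zero (ne_of_gt (hεpos n)), h4, hlog2]
    simp only [he, ha]
    push_cast
    ring
  -- the denominator of T'
  have hDgen : ∀ n, 3 * Real.logb 2 (N' n) + 4 + 4 * Real.logb 2 (ε n)
      = 3 * a n - 2 + 8 * e n := by
    intro n; rw [hL n]; simp only [he]; ring
  -- bounds on e
  have he1 : ∀ n, 1 ≤ e n := by
    intro n
    have h : Real.logb 2 (ε n) ≤ Real.logb 2 (1 / 2) :=
      (Real.logb_le_logb (by norm_num) (hεpos n) (by norm_num)).mpr (hεle n)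
    have h12 : Real.logb 2 ((1:ℝ) / 2) = -1 := by
      rw [Real.logb_div one_ne_zero two_ne_zero, Real.logb_one, hlog2]; ring
    rw [h12] at h
    simp only [he]; linarith
  have heC : ∀ᶠ n : ℕ in atTop, e n ≤ C * Real.logb 2 n := by
    filter_upwards [hCev, eventually_ge_atTop 1] with n hn h1
    have hn0 : (0:ℝ) < (n:ℝ) := by exact_mod_cast h1
    have hr : (0:ℝ) < (n:ℝ) ^ (-C) := Real.rpow_pos_of_pos hn0 _
    have h2 : Real.logb 2 ((n:ℝ) ^ (-C)) ≤ Real.logb 2 (ε n) :=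
      (Real.logb_le_logb (by norm_num) hr (hεpos n)).mpr hn
    have h3 : Real.logb 2 ((n:ℝ) ^ (-C)) = -C * Real.logb 2 n := by
      rw [Real.logb, Real.logb, Real.log_rpow hn0]; ring
    rw [h3] at h2
    simp only [he]; linarith
  have hapos : ∀ᶠ n : ℕ in atTop, 0 < Real.logb 2 n := by
    filter_upwards [eventually_ge_atTop 2] with n hn
    exact Real.logb_pos (by norm_num) (by exact_mod_cast hn)
  -- log₂ n = o(n)
  have hside : ∀ᶠ n : ℕ in atTop, ((n:ℝ) = 0 → True) := by simp
  have hne : ∀ᶠ n : ℕ in atTop, (n:ℝ) ≠ 0 := by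
    filter_upwards [eventually_ge_atTop 1] with n hn
    exact_mod_cast Nat.one_le_iff_ne_zero.mp hn
  have hlogb_o : (fun n : ℕ => Real.logb 2 n) =o[atTop] (fun n : ℕ => (n:ℝ)) := by
    rw [isLittleO_iff_tendsto' (by filter_upwards [hne] with n hn h; exact absurd h hn)]
    simpa [pow_one] using aux_logb_pow_div 1
  -- a = o(n)
  have ha_o : a =o[atTop] (fun n : ℕ => (n:ℝ)) := by
    rw [isLittleO_iff_tendsto' (by filter_upwards [hne] with n hn h; exact absurd h hn)]
    have h := tendsto_inv_atTop_zero.comp aux_logb_nat_tendsto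
    refine Tendsto.congr' ?_ h
    filter_upwards [hne, hapos] with n hn hP
    simp only [Function.comp, ha]
    rw [div_div, mul_comm, ← div_div, div_self hn, one_div]
  -- e = o(n)
  have heO : (fun n : ℕ => e n) =O[atTop] (fun n : ℕ => Real.logb 2 n) := by
    rw [isBigO_iff]
    refine ⟨C, ?_⟩
    filter_upwards [heC, hapos] with n h1 h2
    have h3 := he1 n
    rw [Real.norm_eq_abs, Real.norm_eq_abs, abs_of_pos (by linarith), abs_of_pos h2]
    exact h1
  have he_o : (fun n : ℕ => e n) =o[atTop] (fun n : ℕ => (n:ℝ)) :=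
    heO.trans_isLittleO hlogb_o
  -- part (i)
  have part1 : (fun n : ℕ => Real.logb 2 (N' n)) =o[atTop] (fun n : ℕ => (n:ℝ)) := by
    have hc : (fun _ : ℕ => (-2 : ℝ)) =o[atTop] (fun n : ℕ => (n:ℝ)) := by
      rw [isLittleO_iff_tendsto' (by filter_upwards [hne] with n hn h; exact absurd h hn)]
      simpa using tendsto_const_div_atTop_nhds_zero_nat (-2)
    have h := (ha_o.add hc).add (he_o.const_mul_left 4)
    refine h.congr_left fun n => ?_
    rw [hL n]; ring
  -- part (ii)
  have hDpos : ∀ᶠ n : ℕ in atTop, 0 < 3 * a n - 2 + 8 * e n := by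
    filter_upwards [hapos, eventually_ge_atTop 2] with n hP hn
    have hn0 : (0:ℝ) < (n:ℝ) := by positivity
    have ha0 : 0 < a n := div_pos hn0 hP
    have h3 := he1 n
    linarith
  have hT'eq : ∀ᶠ n : ℕ in atTop, ((n:ℝ) + 2) * T' n - n / 3
      = 2 / 3 + 4 * ((n:ℝ) + 2) * (e n - 1) / (3 * (3 * a n - 2 + 8 * e n)) := by
    filter_upwards [hDpos] with n hD
    have hD0 : 3 * a n - 2 + 8 * e n ≠ 0 := ne_of_gt hD
    rw [hT' n, hDgen n, hL n]
    rw [mul_div_assoc', div_sub_div _ _ hD0 three_ne_zero, div_add_div _ _ three_ne_zero (mul_ne_zero three_ne_zero hD0), div_eq_div_iff (mul_ne_zero hD0 three_ne_zero) (mul_ne_zero three_ne_zero (mul_ne_zero three_ne_zero hD0))]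
    ring
  have hR_tendsto : Tendsto
      (fun n : ℕ => (4 * ((n:ℝ) + 2) * (e n - 1) / (3 * (3 * a n - 2 + 8 * e n))) / n)
      atTop (nhds 0) := by
    apply squeeze_zero_norm' (a := fun n : ℕ => (8 * C / 9) * ((Real.logb 2 n) ^ 2 / n))
    · filter_upwards [hDpos, heC, hapos, eventually_ge_atTop 2] with n hD hec hP hn2
      set P := Real.logb 2 n with hPdef
      have hnR : (2:ℝ) ≤ (n:ℝ) := by exact_mod_cast hn2
      have hn0 : (0:ℝ) < (n:ℝ) := by linarith
      have haval : a n = (n:ℝ) / P := rfl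
      have ha0 : 0 < a n := div_pos hn0 hP
      have he1n := he1 n
      have hnum : 0 ≤ 4 * ((n:ℝ) + 2) * (e n - 1) := by
        apply mul_nonneg (by linarith) (by linarith)
      have h3D : 0 < 3 * (3 * a n - 2 + 8 * e n) := by linarith
      rw [Real.norm_eq_abs, abs_of_nonneg
        (div_nonneg (div_nonneg hnum h3D.le) hn0.le), div_div]
      have hstep : 4 * ((n:ℝ) + 2) * (e n - 1) / (3 * (3 * a n - 2 + 8 * e n) * n)
          ≤ (8 * C * n * P) / (9 * (n:ℝ)^2 / P) := by
        apply div_le_div₀ (by positivity)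
        · have hmul := mul_le_mul (show (n:ℝ) + 2 ≤ 2 * n by linarith)
            (show e n - 1 ≤ C * P by linarith) (by linarith) (by positivity)
          nlinarith
        · exact div_pos (by nlinarith) hP
        · have key : 9 * (n:ℝ)^2 / P = 9 * a n * n := by rw [haval]; ring
          rw [key]; nlinarith
      refine hstep.trans (le_of_eq ?_)
      have hP0 : P ≠ 0 := ne_of_gt hP
      have hn0' : (n:ℝ) ≠ 0 := ne_of_gt hn0
      field_simp
    · simpa using (aux_logb_pow_div 2).const_mul (8 * C / 9)
  have part2 : (fun n : ℕ => ((n:ℝ) + 2) * T' n - n / 3) =o[atTop]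
      (fun n : ℕ => (n:ℝ)) := by
    rw [isLittleO_iff_tendsto' (by filter_upwards [hne] with n hn h; exact absurd h hn)]
    have h := (tendsto_const_div_atTop_nhds_zero_nat (2/3 : ℝ)).add hR_tendsto
    rw [add_zero] at h
    refine Tendsto.congr' ?_ h
    filter_upwards [hT'eq] with n hn
    rw [hn, add_div]
  -- part (iii)
  refine ⟨part1, part2, ?_⟩
  set Q : ℕ → ℝ := fun n => ((n:ℝ) + 2) * T' n + Real.logb 2 (N' n) with hQdef
  clear_value Q
  have hQo : (fun n : ℕ => Q n - n / 3) =o[atTop] (fun n : ℕ => (n:ℝ)) := by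
    have h := part2.add part1
    refine h.congr_left fun n => ?_
    simp only [hQdef]; ring
  have hQ3 : Tendsto (fun n : ℕ => (Q n - n / 3) / n) atTop (nhds 0) :=
    hQo.tendsto_div_nhds_zero
  have hQn : Tendsto (fun n : ℕ => Q n / n) atTop (nhds (1/3)) := by
    have h := hQ3.add (tendsto_const_nhds (x := (1/3 : ℝ)))
    rw [zero_add] at h
    refine Tendsto.congr' ?_ h
    filter_upwards [hne] with n hn
    field_simp
    ring
  have hQlb : ∀ᶠ n : ℕ in atTop, 1/4 < Q n / n := hQn.eventually (lt_mem_nhds (by norm_num))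
  have hQub : ∀ᶠ n : ℕ in atTop, Q n / n < 1 :=
    hQn.eventually (gt_mem_nhds (by norm_num))
  have hlogQ : Tendsto (fun n : ℕ => Real.logb 2 (Q n) / n) atTop (nhds 0) := by
    apply squeeze_zero_norm' (a := fun n : ℕ => Real.logb 2 n / n)
    · filter_upwards [hQlb, hQub, eventually_ge_atTop 4] with n h1 h2 h4
      have hn0 : (0:ℝ) < (n:ℝ) := by
        have : (4:ℝ) ≤ (n:ℝ) := by exact_mod_cast h4
        linarith
      have h4' : (4:ℝ) ≤ (n:ℝ) := by exact_mod_cast h4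
      have hQgt : (n:ℝ) / 4 < Q n := by
        have := (lt_div_iff₀ hn0).mp h1; linarith
      have hQlt : Q n < n := (div_lt_one hn0).mp h2
      have hQ1 : 1 ≤ Q n := by linarith
      have hQpos : 0 < Q n := by linarith
      have hlogQnn : 0 ≤ Real.logb 2 (Q n) := Real.logb_nonneg (by norm_num) hQ1
      have hle : Real.logb 2 (Q n) ≤ Real.logb 2 n :=
        (Real.logb_le_logb (by norm_num) hQpos (by linarith)).mpr hQlt.le
      rw [Real.norm_eq_abs, abs_of_nonneg (div_nonneg hlogQnn hn0.le)]
      gcongr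
    · simpa [pow_one] using aux_logb_pow_div 1
  have hfinal := hQ3.add hlogQ
  rw [add_zero] at hfinal
  refine Tendsto.congr (fun n => ?_) hfinal
  simp only [hQdef]
  rw [← add_div]
  ring_nf
end

section
/- Let n be a natural number and l a real number with 0 ≤ l and ⌊l⌋ ≤ n − 3. Set l' = ⌊l⌋. Then n / log₂ n + l − l' ≥ (n − l') / log₂(n − l'). -/
/-- The decimation inequality: if `0 ≤ l` and `l' = ⌊l⌋ ≤ n - 3`, then
`n/log₂ n + l - l' ≥ (n - l')/log₂(n - l')`. -/
theorem decimation_inequality (n : ℕ) (l : ℝ) (hl : 0 ≤ l) (hfloor : ⌊l⌋ ≤ (n : ℤ) - 3) :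
    (n : ℝ) / Real.logb 2 n + l - (⌊l⌋ : ℝ) ≥
      ((n : ℝ) - (⌊l⌋ : ℝ)) / Real.logb 2 ((n : ℝ) - (⌊l⌋ : ℝ)) := by
  have hl0 : (0:ℤ) ≤ ⌊l⌋ := Int.floor_nonneg.2 hl
  have hl0' : (0:ℝ) ≤ (⌊l⌋:ℝ) := by exact_mod_cast hl0
  set a : ℝ := (n:ℝ) - (⌊l⌋:ℝ) with ha
  have ha3 : (3:ℝ) ≤ a := by
    have : (⌊l⌋:ℝ) ≤ (n:ℝ) - 3 := by
      have : ((⌊l⌋:ℤ):ℝ) ≤ (((n:ℤ) - 3 : ℤ) : ℝ) := by exact_mod_cast hfloor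
      push_cast at this
      linarith
    simp only [ha]; linarith
  have hab : a ≤ (n:ℝ) := by simp only [ha]; linarith
  have he : Real.exp 1 ≤ a := by
    have := Real.exp_one_lt_d9
    linarith
  have heb : Real.exp 1 ≤ (n:ℝ) := le_trans he hab
  have h := Real.log_div_self_antitoneOn (Set.mem_setOf_eq ▸ he)
    (Set.mem_setOf_eq ▸ heb) hab
  -- h : Real.log ↑n / ↑n ≤ Real.log a / a
  have ha0 : (0:ℝ) < a := by linarith
  have hn0 : (0:ℝ) < (n:ℝ) := lt_of_lt_of_le ha0 hab
  have hla : 0 < Real.log a := Real.log_pos (by linarith)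
  have hln : 0 < Real.log n := Real.log_pos (by linarith)
  have hlog2 : 0 < Real.log 2 := Real.log_pos (by norm_num)
  have h' : Real.log (n:ℝ) * a ≤ Real.log a * (n:ℝ) :=
    (div_le_div_iff₀ hn0 ha0).mp h
  have hfract : 0 ≤ l - (⌊l⌋:ℝ) := by
    have := Int.fract_nonneg l
    rw [Int.fract] at this
    linarith
  have key : a / Real.logb 2 a ≤ (n:ℝ) / Real.logb 2 (n:ℝ) := by
    rw [Real.logb, Real.logb, div_div_eq_mul_div, div_div_eq_mul_div,
      div_le_div_iff₀ hla hln]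
    nlinarith
  linarith
end
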